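/- Let T ⊂ ℝ^d be a bounded Lipschitz domain, and let w ∈ H²(T). Let P be a finite-dimensional subspace of L²(T) (piecewise polynomials of degree ≤ k-1), Q₀ the L²-orthogonal projection onto polynomials of degree ≤ k on T, Q_b the L² projection onto degree k-1 polynomials on each boundary edge/face of T, and 𝒬 the L² projection onto P. Define the discrete weak Laplacian Δ_w(Q_h w) ∈ P by (Δ_w(Q_h w), φ)_T = (Q₀w, Δφ)_T − ⟨Q_b w, ∇φ·n⟩_{∂T} + ⟨Q_b(∇w·n), φ⟩_{∂T} for all φ ∈ P. Then Δ_w(Q_h w) = 𝒬(Δw), i.e., the discrete weak Laplacian of the projected function equals the projection of the Laplacian. -/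

import Mathlib

open RealInnerProductSpace

/-- Commuting property of the discrete weak Laplacian with L² projections:
`Δ_w (Q_h w) = 𝒬 (Δ w)`.  Here `X` plays the role of `L²(T)`, `Y` of `L²(∂T)`,
`P = P_{k-1}(T)` is the test polynomial space, `Pk = P_k(T)`, `B` the boundary
polynomial space; `Δp φ`, `gn φ`, `tr φ` denote `Δφ`, `∇φ·n` and the trace of
`φ ∈ P`; `wb`, `wn` are the traces of `w` and `∇w·n`, and `Δw` its Laplacian,
related by Green's identity. -/
theorem stmt_3 {X Y : Type*}
    [NormedAddCommGroup X] [InnerProductSpace ℝ X]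
    [NormedAddCommGroup Y] [InnerProductSpace ℝ Y]
    (P Pk : Submodule ℝ X) (B : Submodule ℝ Y)
    [FiniteDimensional ℝ P] [FiniteDimensional ℝ Pk] [FiniteDimensional ℝ B]
    (Δp : P →ₗ[ℝ] X) (gn tr : P →ₗ[ℝ] Y)
    (hΔp : ∀ φ : P, Δp φ ∈ Pk)
    (hgn : ∀ φ : P, gn φ ∈ B)
    (htr : ∀ φ : P, tr φ ∈ B)
    (w Δw : X) (wb wn : Y)
    (hGreen : ∀ φ : P, ⟪w, Δp φ⟫ - ⟪wb, gn φ⟫ + ⟪wn, tr φ⟫ = ⟪Δw, (φ : X)⟫)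
    (d : P)
    (hd : ∀ φ : P, ⟪(d : X), (φ : X)⟫ =
      ⟪((Submodule.orthogonalProjectionOnto Pk w : Pk) : X), Δp φ⟫
        - ⟪((Submodule.orthogonalProjectionOnto B wb : B) : Y), gn φ⟫
        + ⟪((Submodule.orthogonalProjectionOnto B wn : B) : Y), tr φ⟫) :
    d = Submodule.orthogonalProjectionOnto P Δw := by

  have key : ∀ φ : P, ⟪(d : X), (φ : X)⟫ = ⟪((Submodule.orthogonalProjectionOnto P Δw : P) : X), (φ : X)⟫ := by
    intro φ
    have h1 : ⟪((Submodule.orthogonalProjectionOnto Pk w : Pk) : X), Δp φ⟫ = ⟪w, Δp φ⟫ := by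
      have := Submodule.starProjection_inner_eq_zero w (Δp φ) (hΔp φ)
      rw [Submodule.starProjection_apply, inner_sub_left] at this; linarith
    have h2 : ⟪((Submodule.orthogonalProjectionOnto B wb : B) : Y), gn φ⟫ = ⟪wb, gn φ⟫ := by
      have := Submodule.starProjection_inner_eq_zero wb (gn φ) (hgn φ)
      rw [Submodule.starProjection_apply, inner_sub_left] at this; linarith
    have h3 : ⟪((Submodule.orthogonalProjectionOnto B wn : B) : Y), tr φ⟫ = ⟪wn, tr φ⟫ := by
      have := Submodule.starProjection_inner_eq_zero wn (tr φ) (htr φ)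
      rw [Submodule.starProjection_apply, inner_sub_left] at this; linarith
    have h4 : ⟪((Submodule.orthogonalProjectionOnto P Δw : P) : X), (φ : X)⟫ = ⟪Δw, (φ : X)⟫ := by
      have := Submodule.starProjection_inner_eq_zero Δw (φ : X) φ.2
      rw [Submodule.starProjection_apply, inner_sub_left] at this; linarith
    rw [hd φ, h1, h2, h3, h4, ← hGreen φ]
  have hsub : ∀ φ : P, ⟪((d - Submodule.orthogonalProjectionOnto P Δw : P) : X), (φ : X)⟫ = 0 := by
    intro φ
    have := key φ
    simp only [Submodule.coe_sub, inner_sub_left]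
    linarith
  have hz := hsub (d - Submodule.orthogonalProjectionOnto P Δw)
  have h0 : ((d - Submodule.orthogonalProjectionOnto P Δw : P) : X) = 0 := inner_self_eq_zero.mp hz
  have h0' : d - Submodule.orthogonalProjectionOnto P Δw = 0 := by exact_mod_cast h0
  exact sub_eq_zero.mp h0'
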